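/- Let e, e' be orthonormal vectors in a Hilbert space H, let r ≥ 1 be an integer, and for 0 ≤ s ≤ r set fₛ = cos(πs/(2r)) e + sin(πs/(2r)) e'. Let f̂ₛ denote the orthogonal projection onto span(fₛ). Then ⟨f̂ᵣ f̂ᵣ₋₁ ⋯ f̂₀ e, e'⟩ = (cos(π/(2r)))^r. -/

import Mathlib

/-- The rank-one orthogonal projection `x ↦ ⟨f, x⟩ f` onto the span of a unit vector `f`. -/
noncomputable def projOnto (𝕜 : Type*) {H : Type*} [RCLike 𝕜] [NormedAddCommGroup H]
    [InnerProductSpace 𝕜 H] (f : H) : H →L[𝕜] H :=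
  (innerSL 𝕜 f).smulRight f

lemma projOnto_apply (𝕜 : Type*) {H : Type*} [RCLike 𝕜] [NormedAddCommGroup H]
    [InnerProductSpace 𝕜 H] (f x : H) : projOnto 𝕜 f x = (inner 𝕜 f x : 𝕜) • f := rfl

lemma inner_comb {𝕜 H : Type*} [RCLike 𝕜] [NormedAddCommGroup H] [InnerProductSpace 𝕜 H]
    (e e' : H) (he : ‖e‖ = 1) (he' : ‖e'‖ = 1) (hee' : inner 𝕜 e e' = (0 : 𝕜))
    (a b a' b' : ℝ) :
    (inner 𝕜 ((a:𝕜) • e + (b:𝕜) • e') ((a':𝕜) • e + (b':𝕜) • e') : 𝕜)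
      = ((a*a' + b*b' : ℝ) : 𝕜) := by
  have h1 : (inner 𝕜 e e : 𝕜) = 1 := by
    rw [inner_self_eq_norm_sq_to_K, he]; norm_num
  have h2 : (inner 𝕜 e' e' : 𝕜) = 1 := by
    rw [inner_self_eq_norm_sq_to_K, he']; norm_num
  have h3 : (inner 𝕜 e' e : 𝕜) = 0 := by
    rw [← inner_conj_symm, hee', map_zero]
  simp only [inner_add_left, inner_add_right, inner_smul_left, inner_smul_right,
    h1, h2, h3, hee', RCLike.conj_ofReal, mul_zero, mul_one, add_zero, zero_add]
  push_cast; ring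

theorem chain_of_rank_one_projections
    {𝕜 H : Type*} [RCLike 𝕜] [NormedAddCommGroup H] [InnerProductSpace 𝕜 H]
    (e e' : H) (he : ‖e‖ = 1) (he' : ‖e'‖ = 1) (hee' : inner 𝕜 e e' = (0 : 𝕜))
    (r : ℕ) (hr : 1 ≤ r) (f : Fin (r + 1) → H)
    (hf : ∀ s : Fin (r + 1),
      f s = ((Real.cos (Real.pi * s / (2 * r)) : ℝ) : 𝕜) • e + ((Real.sin (Real.pi * s / (2 * r)) : ℝ) : 𝕜) • e') :
    (inner 𝕜 (((List.ofFn fun s : Fin (r + 1) => projOnto 𝕜 (f s)).reverse.prod) e) e' : 𝕜)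
      = ((Real.cos (Real.pi / (2 * r)) ^ r : ℝ) : 𝕜) := by
  set c : ℝ := Real.cos (Real.pi / (2 * r)) with hc
  have hrR : (r : ℝ) ≠ 0 := by positivity
  -- inner products between the f's
  have hff : ∀ s t : Fin (r + 1), (inner 𝕜 (f s) (f t) : 𝕜)
      = ((Real.cos (Real.pi * s / (2 * r) - Real.pi * t / (2 * r)) : ℝ) : 𝕜) := by
    intro s t
    rw [hf s, hf t, inner_comb e e' he he' hee', Real.cos_sub]
  have key : ∀ k : ℕ, ∀ hk : k ≤ r,
      ((List.ofFn fun s : Fin (k + 1) =>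
        projOnto 𝕜 (f (Fin.castLE (Nat.succ_le_succ hk) s))).reverse.prod) e
      = ((c ^ k : ℝ) : 𝕜) • f ⟨k, Nat.lt_succ_of_le hk⟩ := by
    intro k
    induction k with
    | zero =>
      intro hk
      have h0 : f 0 = e := by rw [hf]; simp
      have h0' : (⟨0, Nat.lt_succ_of_le hk⟩ : Fin (r+1)) = 0 := by ext; simp
      have h0'' : Fin.castLE (Nat.succ_le_succ hk) 0 = (0 : Fin (r+1)) := by ext; simp
      simp [List.ofFn_succ, h0'', h0', h0, projOnto_apply,
        inner_self_eq_norm_sq_to_K, he]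
    | succ k ih =>
      intro hk
      have hk' : k ≤ r := Nat.le_of_succ_le hk
      have hlist : (List.ofFn fun s : Fin (k + 2) =>
          projOnto 𝕜 (f (Fin.castLE (Nat.succ_le_succ hk) s)))
          = (List.ofFn fun s : Fin (k + 1) =>
              projOnto 𝕜 (f (Fin.castLE (Nat.succ_le_succ hk') s))).concat
            (projOnto 𝕜 (f (Fin.castLE (Nat.succ_le_succ hk) (Fin.last (k+1))))) := by
        rw [List.ofFn_succ']
        congr 1
      rw [hlist, List.concat_eq_append, List.reverse_append]
      simp only [List.reverse_cons, List.reverse_nil, List.nil_append, List.singleton_append,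
        List.prod_cons, ContinuousLinearMap.mul_apply, ih hk']
      rw [map_smul, projOnto_apply]
      have hv : Fin.castLE (Nat.succ_le_succ hk) (Fin.last (k+1))
          = (⟨k + 1, Nat.lt_succ_of_le hk⟩ : Fin (r + 1)) := Fin.ext rfl
      rw [hv, hff]
      have harg : Real.pi * ((⟨k+1, Nat.lt_succ_of_le hk⟩ : Fin (r+1)) : ℕ) / (2 * r)
          - Real.pi * ((⟨k, Nat.lt_succ_of_le hk'⟩ : Fin (r+1)) : ℕ) / (2 * r)
          = Real.pi / (2 * r) := by
        push_cast
        field_simp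
        ring
      rw [harg, ← hc, smul_smul]
      congr 1
      push_cast
      try ring
  have hfinal := key r le_rfl
  have hlist2 : (List.ofFn fun s : Fin (r + 1) => projOnto 𝕜 (f s))
      = (List.ofFn fun s : Fin (r + 1) =>
          projOnto 𝕜 (f (Fin.castLE (Nat.succ_le_succ le_rfl) s))) := by
    congr 1
  rw [hlist2, hfinal, inner_smul_left, RCLike.conj_ofReal]
  have hfr : (inner 𝕜 (f ⟨r, Nat.lt_succ_of_le le_rfl⟩) e' : 𝕜) = 1 := by
    have : (e' : H) = ((1:ℝ):𝕜) • e + ((1:ℝ):𝕜) • e' - ((1:ℝ):𝕜) • e := by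
      push_cast; simp
    rw [hf]
    have hcos : Real.cos (Real.pi * ((⟨r, Nat.lt_succ_of_le le_rfl⟩ : Fin (r+1)) : ℕ) / (2*r)) = 0 := by
      have : Real.pi * ((⟨r, Nat.lt_succ_of_le le_rfl⟩ : Fin (r+1)) : ℕ) / (2*r) = Real.pi / 2 := by
        push_cast; field_simp
      rw [this, Real.cos_pi_div_two]
    have hsin : Real.sin (Real.pi * ((⟨r, Nat.lt_succ_of_le le_rfl⟩ : Fin (r+1)) : ℕ) / (2*r)) = 1 := by
      have : Real.pi * ((⟨r, Nat.lt_succ_of_le le_rfl⟩ : Fin (r+1)) : ℕ) / (2*r) = Real.pi / 2 := by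
        push_cast; field_simp
      rw [this, Real.sin_pi_div_two]
    rw [hcos, hsin]
    simp only [inner_add_left, inner_smul_left, RCLike.conj_ofReal, hee']
    rw [inner_self_eq_norm_sq_to_K, he']
    push_cast
    try ring
  rw [hfr, mul_one]
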